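/- Let φ be an automorphism of the free group F with finite basis A. For any distinct u, v ∈ F there exist finite sets U, V ⊂ F such that φ(C²_{[u,v]}) is the disjoint union over u_i ∈ U, v_j ∈ V of the double cylinders C²_{[u_i, v_j]}. -/

import Mathlib

open List
set_option linter.unusedSectionVars false
set_option maxHeartbeats 1000000

variable {A : Type*} [Fintype A] [DecidableEq A]

/-- The formal inverse of a letter in `A ∪ A⁻¹`, encoded as `A × Bool`. -/
def Linv (x : A × Bool) : A × Bool := (x.1, !x.2)

/-- A finite word is reduced if no letter is followed by its inverse. -/
def RedWord (w : List (A × Bool)) : Prop := w.Chain' (fun x y => y ≠ Linv x)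

/-- An infinite word is reduced if no letter is followed by its inverse. -/
def InfRed (X : ℕ → A × Bool) : Prop := ∀ n, X (n + 1) ≠ Linv (X n)

/-- The boundary `∂F(A)`: the set of infinite reduced words. -/
abbrev Bdry (A : Type*) := {X : ℕ → A × Bool // InfRed X}

/-- The prefix of length `n` of an infinite word. -/
def wpre (X : ℕ → A × Bool) (n : ℕ) : List (A × Bool) := (List.range n).map X

/-- The word length `|g|_A` of an element of the free group. -/
def wlen (g : FreeGroup A) : ℕ := (FreeGroup.toWord g).length

/-- The cylinder `C¹_g` for a group element `g`, via its reduced word. -/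
def CylF (g : FreeGroup A) : Set (Bdry A) := {X | wpre X.val (wlen g) = g.toWord}

/-- The cylinder `C¹_l` for a (reduced) word `l`. -/
def CylL (l : List (A × Bool)) : Set (Bdry A) := {X | wpre X.val l.length = l}

/-- `w|_k` : erase the last `k` letters of the word `w`. -/
def del (l : List (A × Bool)) (k : ℕ) : List (A × Bool) := l.take (l.length - k)

/-- `u|^k` : the set of reduced words obtained from `u` by appending `k` letters. -/
def extW (u : List (A × Bool)) (k : ℕ) : Set (List (A × Bool)) :=
  {v | RedWord v ∧ u <+: v ∧ v.length = u.length + k}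

/-- The size `S(φ)`: the maximum of `|φ(a)|` and `|φ⁻¹(a)|` over all `a ∈ A`. -/
def fsize (φ : FreeGroup A ≃* FreeGroup A) : ℕ :=
  Finset.univ.sup fun a : A =>
    max (wlen (φ (FreeGroup.of a))) (wlen (φ.symm (FreeGroup.of a)))

/-- The bounded cancellation constant `C(φ)`: the least `C` with
`|φ(u)| + |φ(v)| ≤ |φ(uv)| + C` for all `u, v`. -/
noncomputable def fcancel (φ : FreeGroup A ≃* FreeGroup A) : ℕ :=
  sInf {C | ∀ u v : FreeGroup A, wlen (φ u) + wlen (φ v) ≤ wlen (φ (u * v)) + C}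

/-- The graph of the continuous extension of `f` to the boundary:
`Y` is the limit of the words `f(X|_m)` as `m → ∞`. -/
def LimMap (f : FreeGroup A → FreeGroup A) (X Y : ℕ → A × Bool) : Prop :=
  ∀ n, ∃ m₀, ∀ m ≥ m₀, ((f (FreeGroup.mk (wpre X m))).toWord.take n) = wpre Y n

/-- The image of a subset of the boundary under the boundary extension of `f`. -/
def bim (f : FreeGroup A → FreeGroup A) (S : Set (Bdry A)) : Set (Bdry A) :=
  {Y | ∃ X ∈ S, LimMap f X.val Y.val}

/-- The length of the longest common prefix of two distinct infinite words. -/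
noncomputable def lcpN (X Y : ℕ → A × Bool) : ℕ := sInf {n | X n ≠ Y n}

/-- The biinfinite geodesic `γ(X,Y)` in the Cayley tree from `X` to `Y` passes
through the vertex `u` and then through the vertex `v` (in that order).
Its vertices are the prefixes of `X` of length `≥ lcpN X Y` (traversed with
decreasing length) followed by the prefixes of `Y` of length `≥ lcpN X Y`
(traversed with increasing length). -/
def Before (X Y : ℕ → A × Bool) (u v : FreeGroup A) : Prop :=
  (∃ i j, lcpN X Y ≤ j ∧ j ≤ i ∧
      u = FreeGroup.mk (wpre X i) ∧ v = FreeGroup.mk (wpre X j)) ∨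
  (∃ i j, lcpN X Y ≤ i ∧ lcpN X Y ≤ j ∧
      u = FreeGroup.mk (wpre X i) ∧ v = FreeGroup.mk (wpre Y j)) ∨
  (∃ i j, lcpN X Y ≤ i ∧ i ≤ j ∧
      u = FreeGroup.mk (wpre Y i) ∧ v = FreeGroup.mk (wpre Y j))

/-- The double cylinder `C²_{[u,v]}` in the double boundary. -/
def DCyl (u v : FreeGroup A) : Set (Bdry A × Bdry A) :=
  {P | P.1.val ≠ P.2.val ∧ Before P.1.val P.2.val u v}


/-! ### Auxiliary development -/

section Aux

open FreeGroup

lemma linv_linv (x : A × Bool) : Linv (Linv x) = x := by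
  simp [Linv]

lemma linv_ne (x : A × Bool) : Linv x ≠ x := by
  simp [Linv, Prod.ext_iff]

lemma RedWord.take {w : List (A × Bool)} (h : RedWord w) (k : ℕ) : RedWord (w.take k) :=
  List.IsChain.prefix h (List.take_prefix k w)

lemma redword_invRev {l : List (A × Bool)} (h : RedWord l) : RedWord (FreeGroup.invRev l) := by
  unfold FreeGroup.invRev
  rw [RedWord, List.Chain', List.isChain_reverse, List.isChain_map]
  refine h.imp ?_
  rintro ⟨a1, a2⟩ ⟨b1, b2⟩ hab hc
  apply hab
  simp only [flip, Linv, Prod.mk.injEq, Bool.not_not] at hc ⊢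
  exact ⟨hc.1.symm, hc.2.symm⟩

lemma not_redword_decomp : ∀ {l : List (A × Bool)}, ¬ RedWord l →
    ∃ (L₂ : List (A × Bool)) (x : A) (b : Bool) (L₃ : List (A × Bool)),
      l = L₂ ++ (x, b) :: (x, !b) :: L₃
  | [] , h => absurd List.isChain_nil h
  | [x], h => absurd (List.isChain_singleton x) h
  | (x :: y :: t), h => by
      rw [RedWord, List.Chain', List.isChain_cons_cons] at h
      push_neg at h
      by_cases hxy : y = Linv x
      · exact ⟨[], x.1, x.2, t, by simp [hxy, Linv]⟩
      · obtain ⟨L₂, a, b, L₃, heq⟩ := not_redword_decomp (fun hc => (h hxy) hc)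
        exact ⟨x :: L₂, a, b, L₃, by rw [List.cons_append, ← heq]⟩

lemma redword_reduce (l : List (A × Bool)) : RedWord (FreeGroup.reduce l) := by
  by_contra h
  obtain ⟨L₂, x, b, L₃, hl⟩ := not_redword_decomp h
  exact FreeGroup.reduce.not hl

lemma reduce_eq_self : ∀ {l : List (A × Bool)}, RedWord l → FreeGroup.reduce l = l
  | [], _ => rfl
  | [x], _ => rfl
  | (x :: y :: t), h => by
      rw [RedWord, List.Chain', List.isChain_cons_cons] at h
      have ih := reduce_eq_self h.2
      rw [FreeGroup.reduce.cons, ih]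
      simp only
      have : ¬ (x.1 = y.1 ∧ x.2 = !y.2) := by
        rintro ⟨h1, h2⟩
        exact h.1 (show y = Linv x by rw [Linv, h1, h2, Bool.not_not])
      rw [if_neg this]

lemma redword_toWord (g : FreeGroup A) : RedWord g.toWord := by
  rw [← FreeGroup.mk_toWord (x := g), FreeGroup.toWord_mk]
  · exact redword_reduce _

lemma toWord_mk_red {l : List (A × Bool)} (h : RedWord l) : (FreeGroup.mk l).toWord = l := by
  rw [FreeGroup.toWord_mk, reduce_eq_self h]

lemma wlen_mk {l : List (A × Bool)} (h : RedWord l) : wlen (FreeGroup.mk l) = l.length := by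
  rw [wlen, toWord_mk_red h]

lemma wlen_inv (g : FreeGroup A) : wlen g⁻¹ = wlen g := FreeGroup.norm_inv_eq

lemma wlen_mul_le (g h : FreeGroup A) : wlen (g * h) ≤ wlen g + wlen h :=
  FreeGroup.norm_mul_le g h

/-- Longest common prefix of two lists. -/
def lcpW : List (A × Bool) → List (A × Bool) → List (A × Bool)
  | [], _ => []
  | _, [] => []
  | x :: xs, y :: ys => if x = y then x :: lcpW xs ys else []

lemma lcpW_self : ∀ l : List (A × Bool), lcpW l l = l
  | [] => rfl
  | x :: xs => by simp [lcpW, lcpW_self xs]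

lemma lcpW_length_le_left : ∀ p q : List (A × Bool), (lcpW p q).length ≤ p.length
  | [], _ => by simp [lcpW]
  | (x :: xs), [] => by simp [lcpW]
  | (x :: xs), (y :: ys) => by
      by_cases h : x = y <;> simp [lcpW, h, Nat.succ_le_succ (lcpW_length_le_left xs ys)]

lemma lcpW_length_le_right : ∀ p q : List (A × Bool), (lcpW p q).length ≤ q.length
  | [], _ => by simp [lcpW]
  | (x :: xs), [] => by simp [lcpW]
  | (x :: xs), (y :: ys) => by
      by_cases h : x = y <;> simp [lcpW, h, Nat.succ_le_succ (lcpW_length_le_right xs ys)]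

lemma take_lcpW_left : ∀ p q : List (A × Bool), p.take (lcpW p q).length = lcpW p q
  | [], _ => by simp [lcpW]
  | (x :: xs), [] => by simp [lcpW]
  | (x :: xs), (y :: ys) => by
      by_cases h : x = y <;> simp [lcpW, h, take_lcpW_left xs ys]

lemma take_lcpW_right : ∀ p q : List (A × Bool), q.take (lcpW p q).length = lcpW p q
  | [], _ => by simp [lcpW]
  | (x :: xs), [] => by simp [lcpW]
  | (x :: xs), (y :: ys) => by
      by_cases h : x = y <;> simp [lcpW, h, take_lcpW_right xs ys]

lemma take_eq_of_le_lcpW {p q : List (A × Bool)} {k : ℕ} (hk : k ≤ (lcpW p q).length) :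
    p.take k = q.take k := by
  have h1 : p.take k = (p.take (lcpW p q).length).take k := by
    rw [List.take_take, min_eq_left hk]
  have h2 : q.take k = (q.take (lcpW p q).length).take k := by
    rw [List.take_take, min_eq_left hk]
  rw [h1, h2, take_lcpW_left, take_lcpW_right]

lemma le_lcpW_of_take_eq : ∀ {p q : List (A × Bool)} {k : ℕ},
    p.take k = q.take k → k ≤ p.length → k ≤ (lcpW p q).length
  | _, _, 0, _, _ => Nat.zero_le _
  | [], _, (k+1), _, hk => by simp at hk
  | (x :: xs), [], (k+1), h, hk => by simp at h
  | (x :: xs), (y :: ys), (k+1), h, hk => by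
      simp only [List.take_succ_cons, List.cons.injEq] at h
      have hk' : k ≤ xs.length := by simpa using hk
      have := le_lcpW_of_take_eq h.2 hk'
      simp [lcpW, h.1, Nat.succ_le_succ this]

lemma lcpW_min3 (p q r : List (A × Bool)) :
    min (lcpW p q).length (lcpW q r).length ≤ (lcpW p r).length := by
  set k := min (lcpW p q).length (lcpW q r).length with hk
  have h1 : p.take k = q.take k := take_eq_of_le_lcpW (min_le_left _ _)
  have h2 : q.take k = r.take k := take_eq_of_le_lcpW (min_le_right _ _)
  exact le_lcpW_of_take_eq (h1.trans h2)
    (le_trans (min_le_left _ _) (lcpW_length_le_left p q))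

lemma getElem_ne_lcpW {p q : List (A × Bool)} (hp : (lcpW p q).length < p.length)
    (hq : (lcpW p q).length < q.length) :
    p[(lcpW p q).length]'hp ≠ q[(lcpW p q).length]'hq := by
  intro hc
  set ℓ := (lcpW p q).length with hℓ
  have h1 : p.take (ℓ + 1) = q.take (ℓ + 1) := by
    rw [List.take_succ, List.take_succ]
    rw [take_eq_of_le_lcpW (le_refl ℓ)]
    congr 1
    rw [List.getElem?_eq_getElem hp, List.getElem?_eq_getElem hq, hc]
  have := le_lcpW_of_take_eq h1 (by omega)
  omega

end Aux


section Aux2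

open FreeGroup

/-- The tree distance formula: `|p⁻¹q| + 2|lcp(p,q)| = |p| + |q|` for reduced words. -/
lemma dist_formula {p q : List (A × Bool)} (hp : RedWord p) (hq : RedWord q) :
    wlen ((FreeGroup.mk p)⁻¹ * FreeGroup.mk q) + 2 * (lcpW p q).length
      = p.length + q.length := by
  set ℓ := (lcpW p q).length with hldef
  have hℓp : ℓ ≤ p.length := lcpW_length_le_left p q
  have hℓq : ℓ ≤ q.length := lcpW_length_le_right p q
  have hgrp : (FreeGroup.mk p)⁻¹ * FreeGroup.mk q
      = FreeGroup.mk (FreeGroup.invRev (p.drop ℓ) ++ q.drop ℓ) := by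
    conv_lhs => rw [← List.take_append_drop ℓ p, ← List.take_append_drop ℓ q]
    rw [← FreeGroup.mul_mk, ← FreeGroup.mul_mk, take_lcpW_left, take_lcpW_right]
    have key : ∀ c s t : FreeGroup A, (c * s)⁻¹ * (c * t) = s⁻¹ * t := by
      intros; group
    rw [key, FreeGroup.inv_mk, FreeGroup.mul_mk]
  have hw : RedWord (FreeGroup.invRev (p.drop ℓ) ++ q.drop ℓ) := by
    rw [RedWord, List.Chain', List.isChain_append]
    refine ⟨redword_invRev (List.IsChain.drop hp ℓ), List.IsChain.drop hq ℓ, ?_⟩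
    intro x hx y hy
    have hplt : ℓ < p.length := by
      by_contra hc
      rw [List.drop_eq_nil_of_le (le_of_not_gt hc)] at hx
      simp [FreeGroup.invRev] at hx
    have hqlt : ℓ < q.length := by
      by_contra hc
      rw [List.drop_eq_nil_of_le (le_of_not_gt hc)] at hy
      simp at hy
    rw [List.drop_eq_getElem_cons hqlt] at hy
    simp only [List.head?_cons, Option.mem_def, Option.some.injEq] at hy
    rw [List.drop_eq_getElem_cons hplt] at hx
    have hinv : ∀ (a : A × Bool) (l : List (A × Bool)), FreeGroup.invRev (a :: l)
        = FreeGroup.invRev l ++ [(a.1, !a.2)] := by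
      intro a l
      simp [FreeGroup.invRev]
    rw [hinv, List.getLast?_concat] at hx
    simp only [Option.mem_def, Option.some.injEq] at hx
    subst hx; subst hy
    intro hc
    apply getElem_ne_lcpW hplt hqlt
    rw [show (p[ℓ] : A × Bool) = Linv (Linv p[ℓ]) from (linv_linv _).symm]
    rw [show (Linv p[ℓ] : A × Bool) = ((p[ℓ].1, !p[ℓ].2) : A × Bool) from rfl, ← hc]
  rw [hgrp, wlen_mk hw, List.length_append, FreeGroup.invRev_length, List.length_drop,
    List.length_drop]
  omega

lemma wlen_one : wlen (1 : FreeGroup A) = 0 := by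
  rw [wlen, FreeGroup.toWord_one]; rfl

lemma wlen_map_mk_le (f : FreeGroup A →* FreeGroup A) (L : ℕ)
    (hf : ∀ x : A × Bool, wlen (f (FreeGroup.mk [x])) ≤ L) :
    ∀ l : List (A × Bool), wlen (f (FreeGroup.mk l)) ≤ L * l.length
  | [] => by
      rw [show FreeGroup.mk ([] : List (A × Bool)) = 1 from FreeGroup.one_eq_mk.symm]
      simp [wlen_one]
  | x :: xs => by
      have hsplit : FreeGroup.mk (x :: xs) = FreeGroup.mk [x] * FreeGroup.mk xs := by
        rw [FreeGroup.mul_mk]; rfl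
      rw [hsplit, f.map_mul]
      calc wlen (f (FreeGroup.mk [x]) * f (FreeGroup.mk xs))
          ≤ wlen (f (FreeGroup.mk [x])) + wlen (f (FreeGroup.mk xs)) := wlen_mul_le _ _
        _ ≤ L + L * xs.length := add_le_add (hf x) (wlen_map_mk_le f L hf xs)
        _ = L * (x :: xs).length := by rw [List.length_cons]; ring

lemma lip_of_letter (f : FreeGroup A →* FreeGroup A) (L : ℕ)
    (hf : ∀ x : A × Bool, wlen (f (FreeGroup.mk [x])) ≤ L) (g : FreeGroup A) :
    wlen (f g) ≤ L * wlen g := by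
  conv_lhs => rw [← FreeGroup.mk_toWord (x := g)]
  exact wlen_map_mk_le f L hf g.toWord

lemma fsize_letter₁ (φ : FreeGroup A ≃* FreeGroup A) (x : A × Bool) :
    wlen (φ (FreeGroup.mk [x])) ≤ fsize φ := by
  obtain ⟨a, b⟩ := x
  have hle : max (wlen (φ (FreeGroup.of a))) (wlen (φ.symm (FreeGroup.of a))) ≤ fsize φ := by
    unfold fsize
    exact Finset.le_sup (f := fun a : A =>
      max (wlen (φ (FreeGroup.of a))) (wlen (φ.symm (FreeGroup.of a)))) (Finset.mem_univ a)
  cases b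
  · have : FreeGroup.mk [(a, false)] = (FreeGroup.of a)⁻¹ := by
      rw [FreeGroup.of, FreeGroup.inv_mk]; rfl
    rw [this, _root_.map_inv, wlen_inv]
    exact le_trans (le_max_left _ _) hle
  · rw [show FreeGroup.mk [(a, true)] = FreeGroup.of a from rfl]
    exact le_trans (le_max_left _ _) hle

lemma fsize_letter₂ (φ : FreeGroup A ≃* FreeGroup A) (x : A × Bool) :
    wlen (φ.symm (FreeGroup.mk [x])) ≤ fsize φ := by
  obtain ⟨a, b⟩ := x
  have hle : max (wlen (φ (FreeGroup.of a))) (wlen (φ.symm (FreeGroup.of a))) ≤ fsize φ := by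
    unfold fsize
    exact Finset.le_sup (f := fun a : A =>
      max (wlen (φ (FreeGroup.of a))) (wlen (φ.symm (FreeGroup.of a)))) (Finset.mem_univ a)
  cases b
  · have : FreeGroup.mk [(a, false)] = (FreeGroup.of a)⁻¹ := by
      rw [FreeGroup.of, FreeGroup.inv_mk]; rfl
    rw [this, _root_.map_inv, wlen_inv]
    exact le_trans (le_max_right _ _) hle
  · rw [show FreeGroup.mk [(a, true)] = FreeGroup.of a from rfl]
    exact le_trans (le_max_right _ _) hle

/-- The key chain/Gromov-product estimate along prefixes of a reduced word. -/
lemma chain_key (f : FreeGroup A →* FreeGroup A) (L : ℕ)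
    (hstep : ∀ x : A × Bool, wlen (f (FreeGroup.mk [x])) ≤ L)
    (hco : ∀ g : FreeGroup A, wlen g ≤ L * wlen (f g))
    (w : List (A × Bool)) (hw : RedWord w) (j : ℕ) :
    ∀ j', j ≤ j' → j' ≤ w.length →
      2 * j ≤ 2 * L * (lcpW (f (FreeGroup.mk (w.take j))).toWord
        (f (FreeGroup.mk (w.take j'))).toWord).length + L * L := by
  intro j' hj
  induction j', hj using Nat.le_induction with
  | base =>
      intro hj'
      rw [lcpW_self]
      have h1 : wlen (FreeGroup.mk (w.take j)) = j := by
        rw [wlen_mk (hw.take j), List.length_take, min_eq_left hj']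
      have h2 := hco (FreeGroup.mk (w.take j))
      rw [h1] at h2
      have h3 : (f (FreeGroup.mk (w.take j))).toWord.length
          = wlen (f (FreeGroup.mk (w.take j))) := rfl
      nlinarith
  | succ j' hjle ih =>
      intro hj'
      have hj'len : j' ≤ w.length := by omega
      have hIH := ih hj'len
      set P := (f (FreeGroup.mk (w.take j))).toWord with hP
      set Q := (f (FreeGroup.mk (w.take j'))).toWord with hQ
      set R := (f (FreeGroup.mk (w.take (j' + 1)))).toWord with hR
      have hQR : 2 * j ≤ 2 * L * (lcpW Q R).length + L * L := by
        have hjlt : j' < w.length := hj'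
        have hsucc : w.take (j' + 1) = w.take j' ++ [w[j']] := by
          rw [List.take_succ, List.getElem?_eq_getElem hjlt]
          rfl
        have hmul : FreeGroup.mk (w.take (j' + 1))
            = FreeGroup.mk (w.take j') * FreeGroup.mk [w[j']] := by
          rw [hsucc, ← FreeGroup.mul_mk]
        have hformula := dist_formula (redword_toWord (f (FreeGroup.mk (w.take j'))))
          (redword_toWord (f (FreeGroup.mk (w.take (j' + 1)))))
        rw [FreeGroup.mk_toWord, FreeGroup.mk_toWord] at hformula
        have hdiff : (f (FreeGroup.mk (w.take j')))⁻¹ * f (FreeGroup.mk (w.take (j' + 1)))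
            = f (FreeGroup.mk [w[j']]) := by
          rw [hmul, f.map_mul]; group
        rw [hdiff] at hformula
        have hQlen : j' ≤ L * Q.length := by
          have h1 : wlen (FreeGroup.mk (w.take j')) = j' := by
            rw [wlen_mk (hw.take j'), List.length_take, min_eq_left hj'len]
          have h2 := hco (FreeGroup.mk (w.take j'))
          rw [h1] at h2
          exact h2
        have hRlen : j' + 1 ≤ L * R.length := by
          have h1 : wlen (FreeGroup.mk (w.take (j' + 1))) = j' + 1 := by
            rw [wlen_mk (hw.take (j' + 1)), List.length_take, min_eq_left hj']
          have h2 := hco (FreeGroup.mk (w.take (j' + 1)))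
          rw [h1] at h2
          exact h2
        have hstepb : wlen (f (FreeGroup.mk [w[j']])) ≤ L := hstep _
        have hmulL : L * (wlen (f (FreeGroup.mk [w[j']])) + 2 * (lcpW Q R).length)
            = L * (Q.length + R.length) := by rw [hformula]
        have hLL : L * wlen (f (FreeGroup.mk [w[j']])) ≤ L * L :=
          Nat.mul_le_mul_left L hstepb
        nlinarith
      have hmin := lcpW_min3 P Q R
      have h1 : 2 * L * min (lcpW P Q).length (lcpW Q R).length + L * L
          ≤ 2 * L * (lcpW P R).length + L * L := by
        have := Nat.mul_le_mul_left (2 * L) hmin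
        omega
      rcases Nat.le_total (lcpW P Q).length (lcpW Q R).length with hc | hc
      · rw [min_eq_left hc] at h1; omega
      · rw [min_eq_right hc] at h1; omega

end Aux2


section Aux3

open FreeGroup

lemma wpre_length (X : ℕ → A × Bool) (n : ℕ) : (wpre X n).length = n := by
  simp [wpre]

lemma wpre_take (X : ℕ → A × Bool) (k m : ℕ) : (wpre X m).take k = wpre X (min k m) := by
  rw [wpre, wpre, ← List.map_take, List.take_range]

lemma wpre_take_of_le (X : ℕ → A × Bool) {k m : ℕ} (h : k ≤ m) :
    (wpre X m).take k = wpre X k := by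
  rw [wpre_take, min_eq_left h]

lemma wpre_getElem (X : ℕ → A × Bool) {i m : ℕ} (h : i < m) :
    (wpre X m)[i]'(by rw [wpre_length]; exact h) = X i := by
  simp [wpre]

lemma wpre_redword {X : ℕ → A × Bool} (hX : InfRed X) (n : ℕ) : RedWord (wpre X n) := by
  rw [RedWord, wpre, List.Chain', List.isChain_map]
  cases n with
  | zero => simp
  | succ n =>
      rw [List.isChain_range_succ]
      intro m _
      exact hX m

lemma wpre_succ (X : ℕ → A × Bool) (m : ℕ) : wpre X (m + 1) = wpre X m ++ [X m] := by
  rw [wpre, wpre, List.range_succ, List.map_append]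
  rfl

lemma wpre_eq_iff {X Y : ℕ → A × Bool} {k : ℕ} :
    wpre X k = wpre Y k ↔ ∀ i < k, X i = Y i := by
  constructor
  · intro h i hi
    have := congrArg (fun l => l.getD i (X 0)) h
    simpa [wpre, List.getD_eq_getElem, hi] using this
  · intro h
    apply List.ext_getElem (by rw [wpre_length, wpre_length])
    intro i h1 h2
    rw [wpre_length] at h1
    rw [wpre_getElem X h1, wpre_getElem Y h1]
    exact h i h1

lemma infred_of_wpre {Z : ℕ → A × Bool} (h : ∀ n, RedWord (wpre Z n)) : InfRed Z := by
  intro n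
  have h2 := h (n + 2)
  rw [wpre_succ, wpre_succ] at h2
  have hsuf : [Z n, Z (n + 1)] <:+ wpre Z n ++ [Z n] ++ [Z (n + 1)] :=
    ⟨wpre Z n, by simp⟩
  have := List.IsChain.suffix h2 hsuf
  exact (List.isChain_pair (R := fun x y => y ≠ Linv x)).mp this

/-- Uniform stabilization of prefixes of `f(X|_m)`. -/
lemma stabX (f : FreeGroup A →* FreeGroup A) (L : ℕ) (hL : 1 ≤ L)
    (hstep : ∀ x : A × Bool, wlen (f (FreeGroup.mk [x])) ≤ L)
    (hco : ∀ g : FreeGroup A, wlen g ≤ L * wlen (f g))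
    {X : ℕ → A × Bool} (hX : InfRed X) {n m m' : ℕ}
    (hm : L * n + L * L ≤ m) (hmm' : m ≤ m') :
    (f (FreeGroup.mk (wpre X m))).toWord.take n
      = (f (FreeGroup.mk (wpre X m'))).toWord.take n := by
  have hkey := chain_key f L hstep hco (wpre X m') (wpre_redword hX m') m m' hmm'
    (le_of_eq (wpre_length X m').symm)
  rw [wpre_take_of_le X hmm', wpre_take, min_self] at hkey
  set ℓ := (lcpW (f (FreeGroup.mk (wpre X m))).toWord
    (f (FreeGroup.mk (wpre X m'))).toWord).length with hldef
  have hn : n ≤ ℓ := by nlinarith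
  exact take_eq_of_le_lcpW hn

end Aux3


section Aux4

open FreeGroup

/-- The boundary limit word of `f(X|_m)` as `m → ∞`. -/
def Yf (f : FreeGroup A →* FreeGroup A) (L : ℕ) (X : ℕ → A × Bool) : ℕ → A × Bool :=
  fun n => (f (FreeGroup.mk (wpre X (L * (n + 1) + L * L)))).toWord.getD n (X 0)

lemma len_lb (f : FreeGroup A →* FreeGroup A) (L : ℕ) (hL : 1 ≤ L)
    (hco : ∀ g : FreeGroup A, wlen g ≤ L * wlen (f g))
    {X : ℕ → A × Bool} (hX : InfRed X) {n m : ℕ} (hm : L * n ≤ m) :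
    n ≤ (f (FreeGroup.mk (wpre X m))).toWord.length := by
  have h1 : wlen (FreeGroup.mk (wpre X m)) = m := by
    rw [wlen_mk (wpre_redword hX m), wpre_length]
  have h2 := hco (FreeGroup.mk (wpre X m))
  rw [h1] at h2
  have h3 : (f (FreeGroup.mk (wpre X m))).toWord.length
      = wlen (f (FreeGroup.mk (wpre X m))) := rfl
  have h4 : L * n ≤ L * wlen (f (FreeGroup.mk (wpre X m))) := le_trans hm h2
  have h5 := Nat.le_of_mul_le_mul_left h4 (by omega : 0 < L)
  omega

lemma Yf_spec (f : FreeGroup A →* FreeGroup A) (L : ℕ) (hL : 1 ≤ L)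
    (hstep : ∀ x : A × Bool, wlen (f (FreeGroup.mk [x])) ≤ L)
    (hco : ∀ g : FreeGroup A, wlen g ≤ L * wlen (f g))
    {X : ℕ → A × Bool} (hX : InfRed X) (n : ℕ) {m : ℕ} (hm : L * n + L * L ≤ m) :
    (f (FreeGroup.mk (wpre X m))).toWord.take n = wpre (Yf f L X) n := by
  have hlen : n ≤ (f (FreeGroup.mk (wpre X m))).toWord.length :=
    len_lb f L hL hco hX (by omega)
  apply List.ext_getElem
  · rw [List.length_take, wpre_length]
    omega
  intro i h1 h2
  rw [List.length_take] at h1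
  have hin : i < n := lt_of_lt_of_le h1 (min_le_left _ _)
  set mi := L * (i + 1) + L * L with hmi
  have hmile : mi ≤ m := by
    have : L * (i + 1) ≤ L * n := Nat.mul_le_mul_left L hin
    omega
  have hstab := stabX f L hL hstep hco hX (n := i + 1) (m := mi) (m' := m) le_rfl hmile
  have hleni : i < (f (FreeGroup.mk (wpre X mi))).toWord.length :=
    len_lb f L hL hco hX (n := i + 1) (m := mi)
      (by rw [hmi]; exact Nat.le_add_right _ _)
  have hgi : i < ((f (FreeGroup.mk (wpre X mi))).toWord.take (i + 1)).length := by
    rw [List.length_take]; omega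
  have e := List.getElem_of_eq hstab hgi
  simp only [List.getElem_take] at e
  have hr : (wpre (Yf f L X) n)[i]'h2 = Yf f L X i := wpre_getElem _ hin
  rw [hr]
  simp only [List.getElem_take]
  rw [show Yf f L X i = (f (FreeGroup.mk (wpre X mi))).toWord.getD i (X 0) from rfl]
  rw [List.getD_eq_getElem _ _ hleni]
  exact e.symm

lemma Yf_infred (f : FreeGroup A →* FreeGroup A) (L : ℕ) (hL : 1 ≤ L)
    (hstep : ∀ x : A × Bool, wlen (f (FreeGroup.mk [x])) ≤ L)
    (hco : ∀ g : FreeGroup A, wlen g ≤ L * wlen (f g))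
    {X : ℕ → A × Bool} (hX : InfRed X) : InfRed (Yf f L X) := by
  apply infred_of_wpre
  intro n
  have := Yf_spec f L hL hstep hco hX n (m := L * n + L * L) le_rfl
  rw [← this]
  exact (redword_toWord _).take n

lemma Yf_lim (f : FreeGroup A →* FreeGroup A) (L : ℕ) (hL : 1 ≤ L)
    (hstep : ∀ x : A × Bool, wlen (f (FreeGroup.mk [x])) ≤ L)
    (hco : ∀ g : FreeGroup A, wlen g ≤ L * wlen (f g))
    {X : ℕ → A × Bool} (hX : InfRed X) :
    LimMap (fun g => f g) X (Yf f L X) := by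
  intro n
  exact ⟨L * n + L * L, fun m hm => Yf_spec f L hL hstep hco hX n hm⟩

lemma lim_unique {f : FreeGroup A → FreeGroup A} {X Y Y' : ℕ → A × Bool}
    (h : LimMap f X Y) (h' : LimMap f X Y') : Y = Y' := by
  funext n
  obtain ⟨m₀, hm₀⟩ := h (n + 1)
  obtain ⟨m₁, hm₁⟩ := h' (n + 1)
  have e1 := hm₀ (max m₀ m₁) (le_max_left _ _)
  have e2 := hm₁ (max m₀ m₁) (le_max_right _ _)
  have : wpre Y (n + 1) = wpre Y' (n + 1) := by rw [← e1, ← e2]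
  exact wpre_eq_iff.mp this n (Nat.lt_succ_self n)

/-- The main inversion lemma : if `Y = ∂f(X)` then `X = ∂f⁻¹(Y)`. -/
lemma lim_symm (φ : FreeGroup A ≃* FreeGroup A) (L : ℕ) (hL : 1 ≤ L)
    (hstep₁ : ∀ x : A × Bool, wlen (φ (FreeGroup.mk [x])) ≤ L)
    (hstep₂ : ∀ x : A × Bool, wlen (φ.symm (FreeGroup.mk [x])) ≤ L)
    {X Y : ℕ → A × Bool} (hX : InfRed X)
    (h : LimMap (fun g => φ g) X Y) : LimMap (fun g => φ.symm g) Y X := by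
  have hco₂ : ∀ g : FreeGroup A, wlen g ≤ L * wlen (φ.symm g) := by
    intro g
    have := lip_of_letter φ.toMonoidHom L (by simpa using hstep₁) (φ.symm g)
    simpa using this
  intro n
  refine ⟨L * n + L * L, fun k hk => ?_⟩
  obtain ⟨m₁, hm₁⟩ := h k
  set m := max m₁ (max (L * k + L * L) n) with hmdef
  have hm₁le : m₁ ≤ m := le_max_left _ _
  have hkm : L * k + L * L ≤ m := le_trans (le_max_left _ _) (le_max_right _ _)
  have hnm : n ≤ m := le_trans (le_max_right _ _) (le_max_right _ _)
  set W := (φ (FreeGroup.mk (wpre X m))).toWord with hW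
  have hco₁ : ∀ g : FreeGroup A, wlen g ≤ L * wlen (φ.toMonoidHom g) := by
    intro g
    have := lip_of_letter φ.symm.toMonoidHom L (by simpa using hstep₂) (φ g)
    simpa using this
  have hWlen : k ≤ W.length := by
    have := len_lb (f := φ.toMonoidHom) L hL hco₁ hX (n := k) (m := m) (by omega)
    simpa using this
  have hpref : W.take k = wpre Y k := hm₁ m hm₁le
  have hkey := chain_key φ.symm.toMonoidHom L (by simpa using hstep₂) hco₂ W
    (redword_toWord _) k W.length hWlen le_rfl
  rw [List.take_length] at hkey
  have hmkW : FreeGroup.mk W = φ (FreeGroup.mk (wpre X m)) := FreeGroup.mk_toWord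
  have hsymmW : φ.symm.toMonoidHom (FreeGroup.mk W) = FreeGroup.mk (wpre X m) := by
    rw [hmkW]
    simp
  rw [hpref, hsymmW] at hkey
  rw [toWord_mk_red (wpre_redword hX m)] at hkey
  set ℓ := (lcpW (φ.symm.toMonoidHom (FreeGroup.mk (wpre Y k))).toWord (wpre X m)).length
    with hldef
  have hn : n ≤ ℓ := by nlinarith
  have htake := take_eq_of_le_lcpW (p := (φ.symm.toMonoidHom (FreeGroup.mk (wpre Y k))).toWord)
    (q := wpre X m) hn
  rw [wpre_take_of_le X hnm] at htake
  simpa using htake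

end Aux4


section Aux5

open FreeGroup

lemma lcpN_le_of_wpre_ne {X Y : ℕ → A × Bool} {b : ℕ}
    (h : wpre X (b + 1) ≠ wpre Y (b + 1)) : lcpN X Y ≤ b := by
  have hex : ∃ i, i < b + 1 ∧ X i ≠ Y i := by
    by_contra hc
    push_neg at hc
    exact h (wpre_eq_iff.mpr hc)
  obtain ⟨i, hi, hne⟩ := hex
  exact le_trans (Nat.sInf_le hne) (by omega)

lemma wpre_ne_of_lcpN_le {X Y : ℕ → A × Bool} (hXY : X ≠ Y) {b : ℕ}
    (h : lcpN X Y ≤ b) : wpre X (b + 1) ≠ wpre Y (b + 1) := by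
  have hmem : lcpN X Y ∈ {n | X n ≠ Y n} := Nat.sInf_mem (Function.ne_iff.mp hXY)
  intro hc
  exact hmem (wpre_eq_iff.mp hc _ (by omega))

lemma eq_mk_wpre_iff {u : FreeGroup A} {X : ℕ → A × Bool} (hX : InfRed X) {i : ℕ} :
    u = FreeGroup.mk (wpre X i) ↔ (i = wlen u ∧ wpre X i = u.toWord) := by
  constructor
  · intro h
    have ht : u.toWord = wpre X i := by rw [h, toWord_mk_red (wpre_redword hX i)]
    exact ⟨by rw [wlen, ht, wpre_length], ht.symm⟩
  · rintro ⟨_, h2⟩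
    have hmk : FreeGroup.mk (wpre X i) = FreeGroup.mk u.toWord := congrArg _ h2
    rw [hmk, FreeGroup.mk_toWord]

lemma mem_cylL_iff {l : List (A × Bool)} {Z : Bdry A} :
    Z ∈ CylL l ↔ wpre Z.val l.length = l := Iff.rfl

/-- Case (i): incomparable vertices. -/
lemma dcyl_incomp {u v : FreeGroup A} (h1 : ¬ u.toWord <+: v.toWord)
    (h2 : ¬ v.toWord <+: u.toWord) :
    DCyl u v = {P : Bdry A × Bdry A | P.1 ∈ CylL u.toWord ∧ P.2 ∈ CylL v.toWord} := by
  set wu := u.toWord with hwu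
  set wv := v.toWord with hwv
  set a := wlen u with ha
  set b := wlen v with hb
  have hawu : wu.length = a := rfl
  have hbwv : wv.length = b := rfl
  set ℓ := (lcpW wu wv).length with hℓ
  have hℓa : ℓ < a := by
    rcases Nat.lt_or_ge ℓ a with h | h
    · exact h
    · exfalso
      have hle : ℓ ≤ a := hawu ▸ lcpW_length_le_left wu wv
      have heq : ℓ = a := le_antisymm hle h
      apply h1
      have : wu.take ℓ = wu := by rw [heq, ← hawu, List.take_length]
      rw [hwu] at this
      rw [hwu, hwv, ← this, take_lcpW_left, ← take_lcpW_right]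
      exact List.take_prefix _ _
  have hℓb : ℓ < b := by
    rcases Nat.lt_or_ge ℓ b with h | h
    · exact h
    · exfalso
      have hle : ℓ ≤ b := hbwv ▸ lcpW_length_le_right wu wv
      have heq : ℓ = b := le_antisymm hle h
      apply h2
      have : wv.take ℓ = wv := by rw [heq, ← hbwv, List.take_length]
      rw [hwv] at this
      rw [hwv, hwu, ← this, take_lcpW_right, ← take_lcpW_left]
      exact List.take_prefix _ _
  ext P
  obtain ⟨⟨X, hX⟩, ⟨Y, hY⟩⟩ := P
  simp only [DCyl, Set.mem_setOf_eq, mem_cylL_iff]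
  constructor
  · rintro ⟨hne, hbef⟩
    rcases hbef with ⟨i, j, hnj, hji, hui, hvj⟩ | ⟨i, j, hni, hnj, hui, hvj⟩ |
      ⟨i, j, hni, hij, hui, hvj⟩
    · exfalso
      obtain ⟨hia, hwua⟩ := (eq_mk_wpre_iff hX).mp hui
      obtain ⟨hjb, hwvb⟩ := (eq_mk_wpre_iff hX).mp hvj
      apply h2
      rw [hwv, hwu, ← hwvb, ← hwua]
      rw [show wpre X j = (wpre X i).take j from (wpre_take_of_le X hji).symm]
      exact List.take_prefix _ _
    · obtain ⟨hia, hwua⟩ := (eq_mk_wpre_iff hX).mp hui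
      obtain ⟨hjb, hwvb⟩ := (eq_mk_wpre_iff hY).mp hvj
      constructor
      · rw [hawu, ha, ← hia]; exact hwua
      · rw [hbwv, hb, ← hjb]; exact hwvb
    · exfalso
      obtain ⟨hia, hwua⟩ := (eq_mk_wpre_iff hY).mp hui
      obtain ⟨hjb, hwvb⟩ := (eq_mk_wpre_iff hY).mp hvj
      apply h1
      rw [hwu, hwv, ← hwua, ← hwvb]
      rw [show wpre Y i = (wpre Y j).take i from (wpre_take_of_le Y hij).symm]
      exact List.take_prefix _ _
  · rintro ⟨hXc, hYc⟩
    rw [hawu] at hXc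
    rw [hbwv] at hYc
    have hXl : X ℓ = wu[ℓ]'(by omega) := by
      rw [← wpre_getElem X (m := a) (by omega)]
      exact List.getElem_of_eq hXc _
    have hYl : Y ℓ = wv[ℓ]'(by omega) := by
      rw [← wpre_getElem Y (m := b) (by omega)]
      exact List.getElem_of_eq hYc _
    have hne : X ℓ ≠ Y ℓ := by
      rw [hXl, hYl]
      exact getElem_ne_lcpW (by omega) (by omega)
    have hlcp : lcpN X Y ≤ ℓ := Nat.sInf_le hne
    refine ⟨fun hc => hne (congrFun hc ℓ), Or.inr (Or.inl ⟨a, b, by omega, by omega, ?_, ?_⟩)⟩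
    · exact (eq_mk_wpre_iff hX).mpr ⟨rfl, hXc⟩
    · exact (eq_mk_wpre_iff hY).mpr ⟨rfl, hYc⟩

/-- Case (ii): `v` is a strict prefix of `u` (on the `X`-side). -/
lemma dcyl_nested_left {u v : FreeGroup A} (h : v.toWord <+: u.toWord) (huv : u ≠ v) :
    DCyl u v = {P : Bdry A × Bdry A | P.1 ∈ CylL u.toWord ∧
      P.2 ∉ CylL (u.toWord.take (wlen v + 1))} := by
  set wu := u.toWord with hwu
  set wv := v.toWord with hwv
  set a := wlen u with ha
  set b := wlen v with hb
  have hawu : wu.length = a := rfl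
  have hbwv : wv.length = b := rfl
  have hba : b < a := by
    have hle : b ≤ a := by rw [← hawu, ← hbwv]; exact h.length_le
    rcases Nat.lt_or_ge b a with hlt | hge
    · exact hlt
    · exfalso
      exact huv (FreeGroup.toWord_injective (h.eq_of_length (by omega))).symm
  have hvtake : wu.take b = wv := by
    obtain ⟨t, ht⟩ := h
    rw [← ht, ← hbwv, List.take_left]
  have htlen : (wu.take (b + 1)).length = b + 1 := by
    rw [List.length_take]; omega
  ext P
  obtain ⟨⟨X, hX⟩, ⟨Y, hY⟩⟩ := P
  simp only [DCyl, Set.mem_setOf_eq, mem_cylL_iff, htlen]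
  constructor
  · rintro ⟨hne, hbef⟩
    rcases hbef with ⟨i, j, hnj, hji, hui, hvj⟩ | ⟨i, j, hni, hnj, hui, hvj⟩ |
      ⟨i, j, hni, hij, hui, hvj⟩
    · obtain ⟨hia, hwua⟩ := (eq_mk_wpre_iff hX).mp hui
      obtain ⟨hjb, hwvb⟩ := (eq_mk_wpre_iff hX).mp hvj
      refine ⟨by rw [hawu, ha, ← hia]; exact hwua, ?_⟩
      have hXpre : wpre X (b + 1) = wu.take (b + 1) := by
        rw [show wpre X (b + 1) = (wpre X i).take (b + 1) from
          (wpre_take_of_le X (by omega)).symm, hwua, hwu]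
      intro hc
      exact wpre_ne_of_lcpN_le hne (b := b) (by omega) (by rw [hXpre, hc])
    · obtain ⟨hia, hwua⟩ := (eq_mk_wpre_iff hX).mp hui
      obtain ⟨hjb, hwvb⟩ := (eq_mk_wpre_iff hY).mp hvj
      refine ⟨by rw [hawu, ha, ← hia]; exact hwua, ?_⟩
      have hXpre : wpre X (b + 1) = wu.take (b + 1) := by
        rw [show wpre X (b + 1) = (wpre X i).take (b + 1) from
          (wpre_take_of_le X (by omega)).symm, hwua, hwu]
      intro hc
      exact wpre_ne_of_lcpN_le hne (b := b) (by omega) (by rw [hXpre, hc])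
    · exfalso
      obtain ⟨hia, hwua⟩ := (eq_mk_wpre_iff hY).mp hui
      obtain ⟨hjb, hwvb⟩ := (eq_mk_wpre_iff hY).mp hvj
      omega
  · rintro ⟨hXc, hYc⟩
    rw [hawu] at hXc
    have hXpre : wpre X (b + 1) = wu.take (b + 1) := by
      rw [show wpre X (b + 1) = (wpre X a).take (b + 1) from
        (wpre_take_of_le X (by omega)).symm, hXc]
    have hpne : wpre X (b + 1) ≠ wpre Y (b + 1) := by
      rw [hXpre]
      exact fun hc => hYc hc.symm
    have hne : X ≠ Y := by
      intro hc
      subst hc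
      exact hpne rfl
    have hlcp : lcpN X Y ≤ b := lcpN_le_of_wpre_ne hpne
    refine ⟨hne, Or.inl ⟨a, b, by omega, by omega, ?_, ?_⟩⟩
    · exact (eq_mk_wpre_iff hX).mpr ⟨rfl, hXc⟩
    · refine (eq_mk_wpre_iff hX).mpr ⟨rfl, ?_⟩
      rw [show wpre X b = (wpre X a).take b from (wpre_take_of_le X (by omega)).symm, hXc,
        hvtake]

/-- Case (iii): `u` is a strict prefix of `v` (on the `Y`-side). -/
lemma dcyl_nested_right {u v : FreeGroup A} (h : u.toWord <+: v.toWord) (huv : u ≠ v) :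
    DCyl u v = {P : Bdry A × Bdry A | P.1 ∉ CylL (v.toWord.take (wlen u + 1)) ∧
      P.2 ∈ CylL v.toWord} := by
  set wu := u.toWord with hwu
  set wv := v.toWord with hwv
  set a := wlen u with ha
  set b := wlen v with hb
  have hawu : wu.length = a := rfl
  have hbwv : wv.length = b := rfl
  have hba : a < b := by
    have hle : a ≤ b := by rw [← hawu, ← hbwv]; exact h.length_le
    rcases Nat.lt_or_ge a b with hlt | hge
    · exact hlt
    · exact absurd (FreeGroup.toWord_injective (h.eq_of_length (by omega))) huv
  have hutake : wv.take a = wu := by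
    obtain ⟨t, ht⟩ := h
    rw [← ht, ← hawu, List.take_left]
  have htlen : (wv.take (a + 1)).length = a + 1 := by
    rw [List.length_take]; omega
  ext P
  obtain ⟨⟨X, hX⟩, ⟨Y, hY⟩⟩ := P
  simp only [DCyl, Set.mem_setOf_eq, mem_cylL_iff, htlen]
  constructor
  · rintro ⟨hne, hbef⟩
    rcases hbef with ⟨i, j, hnj, hji, hui, hvj⟩ | ⟨i, j, hni, hnj, hui, hvj⟩ |
      ⟨i, j, hni, hij, hui, hvj⟩
    · exfalso
      obtain ⟨hia, hwua⟩ := (eq_mk_wpre_iff hX).mp hui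
      obtain ⟨hjb, hwvb⟩ := (eq_mk_wpre_iff hX).mp hvj
      omega
    · obtain ⟨hia, hwua⟩ := (eq_mk_wpre_iff hX).mp hui
      obtain ⟨hjb, hwvb⟩ := (eq_mk_wpre_iff hY).mp hvj
      refine ⟨?_, by rw [hbwv, hb, ← hjb]; exact hwvb⟩
      have hYpre : wpre Y (a + 1) = wv.take (a + 1) := by
        rw [show wpre Y (a + 1) = (wpre Y j).take (a + 1) from
          (wpre_take_of_le Y (by omega)).symm, hwvb, hwv]
      intro hc
      exact wpre_ne_of_lcpN_le hne (b := a) (by omega) (by rw [hc, ← hYpre])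
    · obtain ⟨hia, hwua⟩ := (eq_mk_wpre_iff hY).mp hui
      obtain ⟨hjb, hwvb⟩ := (eq_mk_wpre_iff hY).mp hvj
      refine ⟨?_, by rw [hbwv, hb, ← hjb]; exact hwvb⟩
      have hYpre : wpre Y (a + 1) = wv.take (a + 1) := by
        rw [show wpre Y (a + 1) = (wpre Y j).take (a + 1) from
          (wpre_take_of_le Y (by omega)).symm, hwvb, hwv]
      intro hc
      exact wpre_ne_of_lcpN_le hne (b := a) (by omega) (by rw [hc, ← hYpre])
  · rintro ⟨hXc, hYc⟩
    rw [hbwv] at hYc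
    have hYpre : wpre Y (a + 1) = wv.take (a + 1) := by
      rw [show wpre Y (a + 1) = (wpre Y b).take (a + 1) from
        (wpre_take_of_le Y (by omega)).symm, hYc]
    have hpne : wpre X (a + 1) ≠ wpre Y (a + 1) := by
      rw [hYpre]
      exact fun hc => hXc hc
    have hne : X ≠ Y := by
      intro hc
      subst hc
      exact hpne rfl
    have hlcp : lcpN X Y ≤ a := lcpN_le_of_wpre_ne hpne
    refine ⟨hne, Or.inr (Or.inr ⟨a, b, by omega, by omega, ?_, ?_⟩)⟩
    · refine (eq_mk_wpre_iff hY).mpr ⟨rfl, ?_⟩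
      rw [show wpre Y a = (wpre Y b).take a from (wpre_take_of_le Y (by omega)).symm, hYc,
        hutake]
    · exact (eq_mk_wpre_iff hY).mpr ⟨rfl, hYc⟩

/-- Equal-length distinct reduced words give product double cylinders. -/
lemma dcyl_words {x y : List (A × Bool)} (hx : RedWord x) (hy : RedWord y)
    (hlen : x.length = y.length) (hne : x ≠ y) :
    DCyl (FreeGroup.mk x) (FreeGroup.mk y)
      = {P : Bdry A × Bdry A | P.1 ∈ CylL x ∧ P.2 ∈ CylL y} := by
  have htx : (FreeGroup.mk x).toWord = x := toWord_mk_red hx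
  have hty : (FreeGroup.mk y).toWord = y := toWord_mk_red hy
  have h1 : ¬ (FreeGroup.mk x).toWord <+: (FreeGroup.mk y).toWord := by
    rw [htx, hty]
    intro hc
    exact hne (hc.eq_of_length hlen)
  have h2 : ¬ (FreeGroup.mk y).toWord <+: (FreeGroup.mk x).toWord := by
    rw [htx, hty]
    intro hc
    exact hne (hc.eq_of_length hlen.symm).symm
  rw [dcyl_incomp h1 h2, htx, hty]

end Aux5


section Aux6

open FreeGroup

/-- Every reduced word extends to a point of the boundary. -/
lemma exists_bdry_ext (a₀ : A) {x : List (A × Bool)} (hx : RedWord x) :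
    ∃ Z : Bdry A, wpre Z.val x.length = x := by
  classical
  set q : A × Bool := if hx0 : x = [] then (a₀, true) else x.getLast hx0 with hq
  refine ⟨⟨fun n => if h : n < x.length then x[n] else q, ?_⟩, ?_⟩
  · intro n
    by_cases h1 : n + 1 < x.length
    · have h0 : n < x.length := by omega
      simp only [dif_pos h1, dif_pos h0]
      have := List.isChain_iff_getElem.mp hx n (by omega)
      simpa [List.get_eq_getElem] using this
    · by_cases h0 : n < x.length
      · have hxne : x ≠ [] := by
          intro hc
          rw [hc] at h0
          simp at h0
        simp only [dif_neg h1, dif_pos h0]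
        have hqx : q = x[n] := by
          rw [hq, dif_neg hxne, List.getLast_eq_getElem]
          congr 1
          omega
        rw [hqx]
        exact fun hc => linv_ne _ hc.symm
      · simp only [dif_neg h1, dif_neg h0]
        exact fun hc => linv_ne _ hc.symm
  · apply List.ext_getElem (by rw [wpre_length])
    intro i h1 h2
    rw [wpre_length] at h1
    rw [wpre_getElem _ h1]
    exact dif_pos h2

lemma cyl_sub_of_prefix {w w' : List (A × Bool)} (h : w' <+: w) : CylL w ⊆ CylL w' := by
  intro Z hZ
  rw [mem_cylL_iff] at *
  obtain ⟨t, ht⟩ := h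
  have h2 : wpre Z.val w'.length = (wpre Z.val w.length).take w'.length :=
    (wpre_take_of_le _ (by rw [← ht]; simp)).symm
  rw [h2, hZ, ← ht, List.take_left]

lemma cyl_disjoint_incomp {w w' : List (A × Bool)} (h : ¬ w <+: w') (h' : ¬ w' <+: w) :
    ∀ Z : Bdry A, ¬ (Z ∈ CylL w ∧ Z ∈ CylL w') := by
  rintro Z ⟨h1, h2⟩
  rw [mem_cylL_iff] at h1 h2
  rcases le_total w.length w'.length with hl | hl
  · apply h
    have : wpre Z.val w.length = (wpre Z.val w'.length).take w.length :=
      (wpre_take_of_le _ hl).symm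
    rw [this, h2] at h1
    rw [← h1]
    exact List.take_prefix _ _
  · apply h'
    have : wpre Z.val w'.length = (wpre Z.val w.length).take w'.length :=
      (wpre_take_of_le _ hl).symm
    rw [this, h1] at h2
    rw [← h2]
    exact List.take_prefix _ _

/-- The common assembly step. -/
lemma assembly (φ : FreeGroup A ≃* FreeGroup A) (a₀ : A) (β : Bdry A → Bdry A)
    (hβ : ∀ Q P : Bdry A, LimMap (fun g => φ g) Q.val P.val ↔ Q = β P)
    (𝒳 𝒴 : Set (Bdry A)) (hdisj : ∀ Z : Bdry A, ¬ (Z ∈ 𝒳 ∧ Z ∈ 𝒴))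
    (N : ℕ) (C₁ C₂ : List (A × Bool) → Prop)
    (h𝒳 : ∀ Z : Bdry A, β Z ∈ 𝒳 ↔ C₁ (wpre Z.val N))
    (h𝒴 : ∀ Z : Bdry A, β Z ∈ 𝒴 ↔ C₂ (wpre Z.val N))
    (u v : FreeGroup A)
    (hrect : DCyl u v = {P : Bdry A × Bdry A | P.1 ∈ 𝒳 ∧ P.2 ∈ 𝒴}) :
    ∃ U V : Finset (FreeGroup A),
      ({P : Bdry A × Bdry A | ∃ Q ∈ DCyl u v,
          LimMap (fun g => φ g) Q.1.val P.1.val ∧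
          LimMap (fun g => φ g) Q.2.val P.2.val} =
        ⋃ ui ∈ U, ⋃ vj ∈ V, DCyl ui vj) ∧
      (∀ ui ∈ U, ∀ vj ∈ V, ∀ ui' ∈ U, ∀ vj' ∈ V, (ui, vj) ≠ (ui', vj') →
        DCyl ui vj ∩ DCyl ui' vj' = ∅) := by
  classical
  set S₁ : Set (List (A × Bool)) := {x | x.length = N ∧ RedWord x ∧ C₁ x} with hS₁
  set S₂ : Set (List (A × Bool)) := {x | x.length = N ∧ RedWord x ∧ C₂ x} with hS₂
  have hfin₁ : S₁.Finite :=
    (List.finite_length_le (A × Bool) N).subset (fun x hx => le_of_eq hx.1)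
  have hfin₂ : S₂.Finite :=
    (List.finite_length_le (A × Bool) N).subset (fun x hx => le_of_eq hx.1)
  have hC_mutex : ∀ x : List (A × Bool), x.length = N → RedWord x → ¬ (C₁ x ∧ C₂ x) := by
    rintro x hlen hred ⟨hc1, hc2⟩
    obtain ⟨Z, hZ⟩ := exists_bdry_ext a₀ hred
    rw [hlen] at hZ
    exact hdisj (β Z) ⟨(h𝒳 Z).mpr (by rw [hZ]; exact hc1), (h𝒴 Z).mpr (by rw [hZ]; exact hc2)⟩
  have hprod : ∀ x ∈ S₁, ∀ y ∈ S₂, DCyl (FreeGroup.mk x) (FreeGroup.mk y)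
      = {P : Bdry A × Bdry A | wpre P.1.val N = x ∧ wpre P.2.val N = y} := by
    intro x hx y hy
    have hxy : x ≠ y := by
      intro hc
      exact hC_mutex x hx.1 hx.2.1 ⟨hx.2.2, by rw [hc]; exact hy.2.2⟩
    rw [dcyl_words hx.2.1 hy.2.1 (by rw [hx.1, hy.1]) hxy]
    ext P
    simp only [Set.mem_setOf_eq, mem_cylL_iff, hx.1, hy.1]
  have hLHS : ∀ P : Bdry A × Bdry A,
      (∃ Q ∈ DCyl u v, LimMap (fun g => φ g) Q.1.val P.1.val ∧
        LimMap (fun g => φ g) Q.2.val P.2.val)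
      ↔ (C₁ (wpre P.1.val N) ∧ C₂ (wpre P.2.val N)) := by
    intro P
    constructor
    · rintro ⟨Q, hQ, hl1, hl2⟩
      rw [hrect] at hQ
      have e1 := (hβ Q.1 P.1).mp hl1
      have e2 := (hβ Q.2 P.2).mp hl2
      exact ⟨(h𝒳 P.1).mp (e1 ▸ hQ.1), (h𝒴 P.2).mp (e2 ▸ hQ.2)⟩
    · rintro ⟨hc1, hc2⟩
      refine ⟨(β P.1, β P.2), ?_, (hβ _ _).mpr rfl, (hβ _ _).mpr rfl⟩
      rw [hrect]
      exact ⟨(h𝒳 P.1).mpr hc1, (h𝒴 P.2).mpr hc2⟩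
  refine ⟨hfin₁.toFinset.image FreeGroup.mk, hfin₂.toFinset.image FreeGroup.mk, ?_, ?_⟩
  · ext P
    rw [Set.mem_setOf_eq]
    rw [hLHS P]
    constructor
    · rintro ⟨hc1, hc2⟩
      have hx : wpre P.1.val N ∈ S₁ := ⟨wpre_length _ _, wpre_redword P.1.2 _, hc1⟩
      have hy : wpre P.2.val N ∈ S₂ := ⟨wpre_length _ _, wpre_redword P.2.2 _, hc2⟩
      rw [Set.mem_iUnion₂]
      refine ⟨FreeGroup.mk (wpre P.1.val N),
        Finset.mem_image_of_mem _ (hfin₁.mem_toFinset.mpr hx), ?_⟩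
      rw [Set.mem_iUnion₂]
      refine ⟨FreeGroup.mk (wpre P.2.val N),
        Finset.mem_image_of_mem _ (hfin₂.mem_toFinset.mpr hy), ?_⟩
      rw [hprod _ hx _ hy]
      exact ⟨rfl, rfl⟩
    · intro hP
      rw [Set.mem_iUnion₂] at hP
      obtain ⟨ui, hui, hP⟩ := hP
      rw [Set.mem_iUnion₂] at hP
      obtain ⟨vj, hvj, hP⟩ := hP
      obtain ⟨x, hxS, rfl⟩ := Finset.mem_image.mp hui
      obtain ⟨y, hyS, rfl⟩ := Finset.mem_image.mp hvj
      rw [hfin₁.mem_toFinset] at hxS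
      rw [hfin₂.mem_toFinset] at hyS
      rw [hprod _ hxS _ hyS] at hP
      exact ⟨by rw [hP.1]; exact hxS.2.2, by rw [hP.2]; exact hyS.2.2⟩
  · intro ui hui vj hvj ui' hui' vj' hvj' hnepair
    obtain ⟨x, hxS, rfl⟩ := Finset.mem_image.mp hui
    obtain ⟨y, hyS, rfl⟩ := Finset.mem_image.mp hvj
    obtain ⟨x', hxS', rfl⟩ := Finset.mem_image.mp hui'
    obtain ⟨y', hyS', rfl⟩ := Finset.mem_image.mp hvj'
    rw [hfin₁.mem_toFinset] at hxS hxS'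
    rw [hfin₂.mem_toFinset] at hyS hyS'
    have hxy : x ≠ x' ∨ y ≠ y' := by
      by_contra hc
      push_neg at hc
      exact hnepair (by rw [hc.1, hc.2])
    apply Set.eq_empty_iff_forall_notMem.mpr
    intro P hP
    rw [Set.mem_inter_iff, hprod _ hxS _ hyS, hprod _ hxS' _ hyS'] at hP
    obtain ⟨⟨e1, e2⟩, e1', e2'⟩ := hP
    rcases hxy with hcc | hcc
    · exact hcc (by rw [← e1, ← e1'])
    · exact hcc (by rw [← e2, ← e2'])

end Aux6

theorem image_double_cylinder (hA : 2 ≤ Fintype.card A)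
    (φ : FreeGroup A ≃* FreeGroup A) (u v : FreeGroup A) (huv : u ≠ v) :
    ∃ U V : Finset (FreeGroup A),
      ({P : Bdry A × Bdry A | ∃ Q ∈ DCyl u v,
          LimMap (fun g => φ g) Q.1.val P.1.val ∧
          LimMap (fun g => φ g) Q.2.val P.2.val} =
        ⋃ ui ∈ U, ⋃ vj ∈ V, DCyl ui vj) ∧
      (∀ ui ∈ U, ∀ vj ∈ V, ∀ ui' ∈ U, ∀ vj' ∈ V, (ui, vj) ≠ (ui', vj') →
        DCyl ui vj ∩ DCyl ui' vj' = ∅) := by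
  classical
  have hAne : Nonempty A := Fintype.card_pos_iff.mp (by omega)
  obtain ⟨a₀⟩ := hAne
  set L := max 1 (fsize φ) with hLdef
  have hL : 1 ≤ L := le_max_left _ _
  have hstep₁ : ∀ x : A × Bool, wlen (φ (FreeGroup.mk [x])) ≤ L :=
    fun x => le_trans (fsize_letter₁ φ x) (le_max_right _ _)
  have hstep₂ : ∀ x : A × Bool, wlen (φ.symm (FreeGroup.mk [x])) ≤ L :=
    fun x => le_trans (fsize_letter₂ φ x) (le_max_right _ _)
  have hstep₂' : ∀ x : A × Bool, wlen (φ.symm.toMonoidHom (FreeGroup.mk [x])) ≤ L := by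
    simpa using hstep₂
  have hco₂ : ∀ g : FreeGroup A, wlen g ≤ L * wlen (φ.symm.toMonoidHom g) := by
    intro g
    have := lip_of_letter φ.toMonoidHom L (by simpa using hstep₁) (φ.symm g)
    simpa using this
  set β : Bdry A → Bdry A := fun Z =>
    ⟨Yf φ.symm.toMonoidHom L Z.val, Yf_infred _ L hL hstep₂' hco₂ Z.2⟩ with hβdef
  have hβlim : ∀ P : Bdry A, LimMap (fun g => φ.symm g) P.val (β P).val := by
    intro P
    have := Yf_lim φ.symm.toMonoidHom L hL hstep₂' hco₂ P.2
    exact this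
  have hβ : ∀ Q P : Bdry A, LimMap (fun g => φ g) Q.val P.val ↔ Q = β P := by
    intro Q P
    constructor
    · intro h
      have h1 : LimMap (fun g => φ.symm g) P.val Q.val := lim_symm φ L hL hstep₁ hstep₂ Q.2 h
      exact Subtype.ext (lim_unique h1 (hβlim P))
    · rintro rfl
      have h3 := lim_symm φ.symm L hL hstep₂ (by simpa using hstep₁) P.2 (hβlim P)
      simpa using h3
  have hmem : ∀ (w : List (A × Bool)) (N : ℕ), L * w.length + L * L ≤ N →
      ∀ Z : Bdry A, (β Z ∈ CylL w ↔
        (φ.symm.toMonoidHom (FreeGroup.mk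
          ((wpre Z.val N).take (L * w.length + L * L)))).toWord.take w.length = w) := by
    intro w N hN Z
    rw [mem_cylL_iff, wpre_take_of_le Z.val hN]
    show wpre (Yf φ.symm.toMonoidHom L Z.val) w.length = w ↔ _
    rw [← Yf_spec φ.symm.toMonoidHom L hL hstep₂' hco₂ Z.2 w.length
      (m := L * w.length + L * L) le_rfl]
  by_cases hvu : v.toWord <+: u.toWord
  · -- v is a strict prefix of u
    set w₁ := u.toWord with hw₁
    set w₂ := u.toWord.take (wlen v + 1) with hw₂
    set N := (L * w₁.length + L * L) + (L * w₂.length + L * L) with hN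
    refine assembly φ a₀ β hβ (CylL w₁) ((CylL w₂)ᶜ) ?_ N
      (fun x => (φ.symm.toMonoidHom (FreeGroup.mk
        (x.take (L * w₁.length + L * L)))).toWord.take w₁.length = w₁)
      (fun x => ¬ ((φ.symm.toMonoidHom (FreeGroup.mk
        (x.take (L * w₂.length + L * L)))).toWord.take w₂.length = w₂))
      ?_ ?_ u v ?_
    · rintro Z ⟨h1, h2⟩
      exact h2 (cyl_sub_of_prefix (List.take_prefix _ _) h1)
    · intro Z
      exact hmem w₁ N (by omega) Z
    · intro Z
      rw [Set.mem_compl_iff]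
      exact not_congr (hmem w₂ N (by omega) Z)
    · exact dcyl_nested_left hvu huv
  · by_cases huvp : u.toWord <+: v.toWord
    · -- u is a strict prefix of v
      set w₁ := v.toWord.take (wlen u + 1) with hw₁
      set w₂ := v.toWord with hw₂
      set N := (L * w₁.length + L * L) + (L * w₂.length + L * L) with hN
      refine assembly φ a₀ β hβ ((CylL w₁)ᶜ) (CylL w₂) ?_ N
        (fun x => ¬ ((φ.symm.toMonoidHom (FreeGroup.mk
          (x.take (L * w₁.length + L * L)))).toWord.take w₁.length = w₁))
        (fun x => (φ.symm.toMonoidHom (FreeGroup.mk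
          (x.take (L * w₂.length + L * L)))).toWord.take w₂.length = w₂)
        ?_ ?_ u v ?_
      · rintro Z ⟨h1, h2⟩
        exact h1 (cyl_sub_of_prefix (List.take_prefix _ _) h2)
      · intro Z
        rw [Set.mem_compl_iff]
        exact not_congr (hmem w₁ N (by omega) Z)
      · intro Z
        exact hmem w₂ N (by omega) Z
      · exact dcyl_nested_right huvp huv
    · -- incomparable
      set w₁ := u.toWord with hw₁
      set w₂ := v.toWord with hw₂
      set N := (L * w₁.length + L * L) + (L * w₂.length + L * L) with hN
      refine assembly φ a₀ β hβ (CylL w₁) (CylL w₂) ?_ N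
        (fun x => (φ.symm.toMonoidHom (FreeGroup.mk
          (x.take (L * w₁.length + L * L)))).toWord.take w₁.length = w₁)
        (fun x => (φ.symm.toMonoidHom (FreeGroup.mk
          (x.take (L * w₂.length + L * L)))).toWord.take w₂.length = w₂)
        ?_ ?_ u v ?_
      · exact cyl_disjoint_incomp huvp hvu
      · intro Z
        exact hmem w₁ N (by omega) Z
      · intro Z
        exact hmem w₂ N (by omega) Z
      · exact dcyl_incomp huvp hvu
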